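/- Let G be a connected undirected graph with at least 3 vertices having a cut vertex v, and let G* be the symmetric digraph obtained by replacing each edge of G by arcs in both directions. Then no negative-diagonal sign pattern whose digraph is G* allows symplectic pairs. -/

import Mathlib

open Matrix

/-- `c` traces a directed cycle of length `m+1` in the digraph `R`:
distinct vertices, consecutive arcs (indices wrap around in `Fin (m+1)`). -/
def DicycleOn {V : Type*} {m : ℕ} (R : V → V → Prop) (c : Fin (m+1) → V) : Prop :=
  Function.Injective c ∧ ∀ i, R (c i) (c (i+1))

/-- A digraph is noneven if some 0,1-weighting (valued in `ZMod 2`) of its arcs makes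
every directed cycle have odd total weight. -/
def IsNoneven {V : Type*} (R : V → V → Prop) : Prop :=
  ∃ w : V → V → ZMod 2, ∀ (m : ℕ) (c : Fin (m+1) → V),
    DicycleOn R c → ∑ i, w (c i) (c (i+1)) = 1

/-- A digraph is even if every 0,1-weighting of its arcs admits a directed cycle
of even total weight. -/
def IsEvenDigraph {V : Type*} (R : V → V → Prop) : Prop :=
  ∀ w : V → V → ZMod 2, ∃ (m : ℕ) (c : Fin (m+1) → V),
    DicycleOn R c ∧ ∑ i, w (c i) (c (i+1)) = 0

def StronglyConnected {V : Type*} (R : V → V → Prop) : Prop :=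
  ∀ u v, Relation.ReflTransGen R u v

/-- Removing any single vertex leaves a strongly connected digraph. -/
def StronglyTwoConnected {V : Type*} (R : V → V → Prop) : Prop :=
  ∀ x : V, StronglyConnected (fun a b : {y : V // y ≠ x} => R a b)

def SemiComplete {V : Type*} (R : V → V → Prop) : Prop :=
  ∀ u v : V, u ≠ v → R u v ∨ R v u

/-- The digraph W₄: double arcs 0↔1 and 2↔3, single arcs 0→2, 2→1, 1→3, 3→0
(the unique 2-connected semi-complete noneven digraph on 4 vertices; every vertex
has indegree 2 and outdegree 2 and there are 8 arcs). -/
def W4 : Fin 4 → Fin 4 → Prop := fun u v =>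
  (u = 0 ∧ v = 1) ∨ (u = 1 ∧ v = 0) ∨ (u = 2 ∧ v = 3) ∨ (u = 3 ∧ v = 2) ∨
  (u = 0 ∧ v = 2) ∨ (u = 2 ∧ v = 1) ∨ (u = 1 ∧ v = 3) ∨ (u = 3 ∧ v = 0)

/-- The symmetric double 4-cycle C₄*. -/
def C4star : Fin 4 → Fin 4 → Prop := fun u v => v = u + 1 ∨ u = v + 1

def DigraphIso {V W : Type*} (R : V → V → Prop) (S : W → W → Prop) : Prop :=
  ∃ e : V ≃ W, ∀ u v, R u v ↔ S (e u) (e v)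

/-- A sign pattern: entries in {-1, 0, 1}. -/
def IsSignPattern {I : Type*} (H : Matrix I I ℝ) : Prop :=
  ∀ i j, H i j = -1 ∨ H i j = 0 ∨ H i j = 1

/-- `A ∈ Q(H)`: the matrix `A` has sign pattern `H`. -/
def HasSignPattern {I : Type*} (A H : Matrix I I ℝ) : Prop :=
  ∀ i j, Real.sign (A i j) = H i j

/-- `Q(H)` contains a symplectic pair `(A, D)` with `Aᵀ D = I`. -/
def AllowsSymplecticPairs {I : Type*} [Fintype I] [DecidableEq I] (H : Matrix I I ℝ) : Prop :=
  ∃ A D : Matrix I I ℝ, HasSignPattern A H ∧ HasSignPattern D H ∧ Aᵀ * D = 1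

def IsSignNonsingular {I : Type*} [Fintype I] [DecidableEq I] (H : Matrix I I ℝ) : Prop :=
  ∀ A : Matrix I I ℝ, HasSignPattern A H → A.det ≠ 0

def NegativeDiagonal {I : Type*} (H : Matrix I I ℝ) : Prop := ∀ i, H i i = -1

/-- The (unweighted) digraph of the pattern `H` is `R`: an arc `(i,j)`, `i ≠ j`,
exactly for the off-diagonal nonzero entries. -/
def PatternDigraph {I : Type*} (H : Matrix I I ℝ) (R : I → I → Prop) : Prop :=
  ∀ i j, i ≠ j → (H i j ≠ 0 ↔ R i j)

/-- An unweighted digraph allows symplectic pairs if some negative-diagonal sign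
pattern whose digraph is `R` allows symplectic pairs. -/
def DigraphAllowsSymplecticPairs {V : Type*} [Fintype V] [DecidableEq V]
    (R : V → V → Prop) : Prop :=
  ∃ H : Matrix V V ℝ, IsSignPattern H ∧ NegativeDiagonal H ∧
    PatternDigraph H R ∧ AllowsSymplecticPairs H

/-- Tree edges of the caterpillar tree underlying an extended caterpillar:
consecutive backbone vertices, and blossom vertices joined to their backbone vertex.
`pos` is the blossom (backbone) index of a vertex, `bb j` the backbone vertex of index `j`. -/
def CaterpillarTreeEdge {n : ℕ} (pos : Fin n → ℕ) (bb : ℕ → Fin n) (u v : Fin n) : Prop :=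
  u ≠ v ∧ ((u = bb (pos u) ∧ v = bb (pos v) ∧ (pos v = pos u + 1 ∨ pos u = pos v + 1)) ∨
           (pos u = pos v ∧ (u = bb (pos u) ∨ v = bb (pos v))))

/-- `R` is an extended caterpillar on `Fin n`, where the natural order of `Fin n`
is the backbone-induced total order: there are `k` blossoms (`pos` monotone, surjective
onto `{0, …, k-1}` with backbone vertices `bb j`); the first and last blossoms are
trivial (no blossom vertices at the ends of the backbone); and the arcs are: one arc
`u → v` for every pair `v < u`, together with both arcs of every tree edge. -/
def IsExtendedCaterpillar {n : ℕ} (R : Fin n → Fin n → Prop) : Prop :=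
  ∃ (k : ℕ) (pos : Fin n → ℕ) (bb : ℕ → Fin n),
    0 < k ∧ Monotone pos ∧ (∀ v, pos v < k) ∧ (∀ j, j < k → pos (bb j) = j) ∧
    (∀ v, pos v = 0 → v = bb 0) ∧ (∀ v, pos v = k - 1 → v = bb (k - 1)) ∧
    (∀ u v, R u v ↔ (v < u ∨ (u < v ∧ CaterpillarTreeEdge pos bb u v)))

/-- Digraphs obtainable from the symmetric double cycle `C_k*` by subdividing arcs
and splitting vertices (the weak k-double-cycles). -/
inductive WeakDoubleCycle : (k : ℕ) → (V : Type) → (V → V → Prop) → Prop where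
  | base (m : ℕ) : WeakDoubleCycle (m+1) (Fin (m+1)) (fun u v => v = u + 1 ∨ u = v + 1)
  | subdivide {k : ℕ} {V : Type} {R : V → V → Prop} (a b : V) (hab : R a b)
      (h : WeakDoubleCycle k V R) :
      WeakDoubleCycle k (Option V) (fun x y =>
        (x = some a ∧ y = none) ∨ (x = none ∧ y = some b) ∨
        (∃ u v, x = some u ∧ y = some v ∧ R u v ∧ ¬(u = a ∧ v = b)))
  | split {k : ℕ} {V : Type} {R : V → V → Prop} (a : V) (h : WeakDoubleCycle k V R) :
      WeakDoubleCycle k (Option V) (fun x y =>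
        (x = some a ∧ y = none) ∨
        (∃ v, x = none ∧ y = some v ∧ R a v) ∨
        (∃ u v, x = some u ∧ y = some v ∧ R u v ∧ u ≠ a))

/-- C₄-cockades: start with the 4-cycle; repeatedly pick an edge `(u,v)`, add two new
vertices `u', v'` and the edges `(u,u')`, `(u',v')`, `(v',v)`. -/
inductive IsC4Cockade : (V : Type) → SimpleGraph V → Prop where
  | base : IsC4Cockade (Fin 4) (SimpleGraph.fromRel (fun u v => v = u + 1))
  | attach {V : Type} {G : SimpleGraph V} (u v : V) (huv : G.Adj u v)
      (h : IsC4Cockade V G) :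
      IsC4Cockade (V ⊕ Fin 2)
        (SimpleGraph.fromRel (fun x y =>
          (∃ a b, x = Sum.inl a ∧ y = Sum.inl b ∧ G.Adj a b) ∨
          (x = Sum.inl u ∧ y = Sum.inr 0) ∨ (x = Sum.inr 0 ∧ y = Sum.inr 1) ∨
          (x = Sum.inr 1 ∧ y = Sum.inl v)))

/-- `G` is 2-connected: connected, and removing any single vertex leaves it connected. -/
def GraphTwoConnected {V : Type*} (G : SimpleGraph V) : Prop :=
  G.Connected ∧ ∀ v : V, (G.induce {u | u ≠ v}).Connected

/-- a connected graph with ≥ 3 vertices having a cut vertex gives a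
symmetric digraph G* for which no negative-diagonal pattern allows symplectic pairs. -/
theorem stmt3 {n : ℕ} (hn : 3 ≤ n) (G : SimpleGraph (Fin n)) (hconn : G.Connected)
    (v : Fin n) (hcut : ¬ (G.induce {u | u ≠ v}).Connected)
    (H : Matrix (Fin n) (Fin n) ℝ) (hp : IsSignPattern H) (hd : NegativeDiagonal H)
    (hdig : PatternDigraph H (fun a b => G.Adj a b)) :
    ¬ AllowsSymplecticPairs H := by
  rintro ⟨A, D, hMA, hMD, hAD⟩
  -- the adjacency relation of G with v removed
  set R' : Fin n → Fin n → Prop := fun a b => G.Adj a b ∧ a ≠ v ∧ b ≠ v with hR'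
  have hR'symm : Symmetric R' := fun a b h => ⟨h.1.symm, h.2.2, h.2.1⟩
  have hsymm : Symmetric (Relation.ReflTransGen R') :=
    by haveI : Std.Symm R' := ⟨hR'symm⟩; exact fun a b h => Std.Symm.symm a b h
  -- reachability via R' gives reachability in the induced graph
  have key : ∀ a b : Fin n, Relation.ReflTransGen R' a b →
      ∀ (ha : a ∈ {u : Fin n | u ≠ v}) (hb : b ∈ {u : Fin n | u ≠ v}),
      (G.induce {u : Fin n | u ≠ v}).Reachable ⟨a, ha⟩ ⟨b, hb⟩ := by
    intro a b h
    induction h with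
    | refl => intro ha hb; exact SimpleGraph.Reachable.refl _
    | @tail b c hab hbc ih =>
      intro ha hc
      have hb : b ∈ {u : Fin n | u ≠ v} := hbc.2.1
      have hadj : (G.induce {u : Fin n | u ≠ v}).Adj ⟨b, hb⟩ ⟨c, hc⟩ := hbc.1
      exact (ih ha hb).trans hadj.reachable
  -- walking from a vertex ≠ v: either avoid v, or reach a neighbor of v
  have walklem : ∀ (a b : Fin n), G.Walk a b → a ≠ v →
      Relation.ReflTransGen R' a b ∨
      ∃ a', G.Adj v a' ∧ a' ≠ v ∧ Relation.ReflTransGen R' a a' := by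
    intro a b w
    induction w with
    | nil => intro _; exact Or.inl Relation.ReflTransGen.refl
    | @cons a c b h p ih =>
      intro ha
      by_cases hc : c = v
      · exact Or.inr ⟨a, hc ▸ h.symm, ha, Relation.ReflTransGen.refl⟩
      · have step : R' a c := ⟨h, ha, hc⟩
        rcases ih hc with h1 | ⟨a', hadj, ha', hr⟩
        · exact Or.inl (Relation.ReflTransGen.head step h1)
        · exact Or.inr ⟨a', hadj, ha', Relation.ReflTransGen.head step hr⟩
  -- get two vertices not reachable in the induced graph
  obtain ⟨u0, hu0⟩ : ∃ u : Fin n, u ≠ v := by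
    have : 1 < Fintype.card (Fin n) := by simp; omega
    exact Fintype.exists_ne_of_one_lt_card this v
  have hnonempty : Nonempty ↥({u : Fin n | u ≠ v}) := ⟨⟨u0, hu0⟩⟩
  have hnp : ¬ ∀ x y : ↥({u : Fin n | u ≠ v}),
      (G.induce {u : Fin n | u ≠ v}).Reachable x y := fun hp' => hcut (@SimpleGraph.Connected.mk _ _ hp' hnonempty)
  push_neg at hnp
  obtain ⟨x, y, hxy⟩ := hnp
  obtain ⟨w⟩ := hconn.preconnected x.1 y.1
  obtain ⟨w'⟩ := hconn.preconnected y.1 x.1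
  rcases walklem _ _ w x.2 with hreach | ⟨a', haadj, ha'v, hra⟩
  · exact hxy (key _ _ hreach x.2 y.2)
  rcases walklem _ _ w' y.2 with hreach | ⟨b', hbadj, hb'v, hrb⟩
  · exact hxy (key _ _ (hsymm hreach) x.2 y.2)
  -- a' and b' are neighbors of v in different components of G - v
  have hnr : ¬ Relation.ReflTransGen R' a' b' := by
    intro h
    exact hxy (key _ _ ((hra.trans h).trans (hsymm hrb)) x.2 y.2)
  have hab : a' ≠ b' := fun h => hnr (h ▸ Relation.ReflTransGen.refl)
  -- the matrix contradiction
  have h1 : (Aᵀ * D) a' b' = 0 := by rw [hAD]; exact Matrix.one_apply_ne hab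
  rw [Matrix.mul_apply] at h1
  have hHne : ∀ (B : Matrix (Fin n) (Fin n) ℝ), HasSignPattern B H →
      ∀ i j, B i j ≠ 0 → H i j ≠ 0 := by
    intro B hB i j hij h0
    exact hij (Real.sign_eq_zero_iff.mp (by rw [hB i j, h0]))
  have hzero : ∀ k ∈ (Finset.univ : Finset (Fin n)), k ≠ v → Aᵀ a' k * D k b' = 0 := by
    intro k _ hk
    rw [Matrix.transpose_apply]
    by_contra hne0
    have hA0 : H k a' ≠ 0 := hHne A hMA k a' (left_ne_zero_of_mul hne0)
    have hD0 : H k b' ≠ 0 := hHne D hMD k b' (right_ne_zero_of_mul hne0)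
    by_cases hka : k = a'
    · subst hka
      have hadj : G.Adj k b' := (hdig k b' hab).mp hD0
      exact hnr (Relation.ReflTransGen.single ⟨hadj, ha'v, hb'v⟩)
    · by_cases hkb : k = b'
      · subst hkb
        have hadj : G.Adj k a' := (hdig k a' hka).mp hA0
        exact hnr (Relation.ReflTransGen.single ⟨hadj.symm, ha'v, hb'v⟩)
      · have hadj1 : G.Adj k a' := (hdig k a' hka).mp hA0
        have hadj2 : G.Adj k b' := (hdig k b' hkb).mp hD0
        exact hnr (Relation.ReflTransGen.head ⟨hadj1.symm, ha'v, hk⟩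
          (Relation.ReflTransGen.single ⟨hadj2, hk, hb'v⟩))
  rw [Finset.sum_eq_single_of_mem v (Finset.mem_univ v) hzero] at h1
  rw [Matrix.transpose_apply] at h1
  have hHva : H v a' ≠ 0 := (hdig v a' (Ne.symm ha'v)).mpr haadj
  have hHvb : H v b' ≠ 0 := (hdig v b' (Ne.symm hb'v)).mpr hbadj
  have hAv : A v a' ≠ 0 := fun h0 => hHva (by rw [← hMA v a', h0, Real.sign_zero])
  have hDv : D v b' ≠ 0 := fun h0 => hHvb (by rw [← hMD v b', h0, Real.sign_zero])
  exact mul_ne_zero hAv hDv h1
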